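/- Let b₀, b₁ > 0 and η₀, η₁ ∈ (0,1]. Then (Lap(b₀) ⊗ Lap(b₁)){(l₀,l₁) ∈ ℝ² : G(l₀,l₁) > b₀·log(1/η₀) + b₁·log(1/η₁)} ≤ η₀ + η₁. (Fairness guarantee of Theorem 2: with probability at least 1 − η₀ − η₁ over the independent Laplace noises, the statistical parity gap of Algorithm 2's classifier is at most log(1/η₀)/(n₀ε₂) + log(1/η₁)/(n₁ε₃), where b₀ = 1/(n₀ε₂) and b₁ = 1/(n₁ε₃).) -/

import Mathlib

open MeasureTheory

/-- The Laplace distribution on `ℝ` with scale `b`. -/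
noncomputable def Lap (b : ℝ) : Measure ℝ :=
  volume.withDensity fun x => ENNReal.ofReal ((2 * b)⁻¹ * Real.exp (-|x| / b))

/-- Projection onto `[0,1]`. -/
noncomputable def clip (x : ℝ) : ℝ := min (max x 0) 1

/-- The statistical parity gap of Algorithm 2's classifier as a function of the Laplace
noise realizations `(l₀, l₁)`, with clipped perturbed rates `α̃ = [α+l₀]₀¹`,
`β̃ = [β+l₁]₀¹` (division by zero yields `0`, as in Lean's convention). -/
noncomputable def G (α β l₀ l₁ : ℝ) : ℝ :=
  let αt := clip (α + l₀)
  let βt := clip (β + l₁)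
  if βt ≤ αt then
    |α * (αt + βt) / (2 * αt) - β - (1 - β) * (αt - βt) / (2 * (1 - βt))|
  else
    |β * (αt + βt) / (2 * βt) - α - (1 - α) * (βt - αt) / (2 * (1 - αt))|

lemma clip_mem (x : ℝ) : clip x ∈ Set.Icc (0:ℝ) 1 :=
  ⟨le_min (le_max_right x 0) zero_le_one, min_le_right _ _⟩

lemma clip_of_mem {x : ℝ} (h : x ∈ Set.Icc (0:ℝ) 1) : clip x = x := by
  simp [clip, max_eq_left h.1, min_eq_left h.2]

lemma clip_lip (x y : ℝ) : |clip x - clip y| ≤ |x - y| := by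
  unfold clip
  calc |min (max x 0) 1 - min (max y 0) 1| ≤ max |max x 0 - max y 0| |1 - 1| :=
        abs_min_sub_min_le_max _ _ _ _
    _ = |max x 0 - max y 0| := by simp
    _ ≤ |x - y| := abs_max_sub_max_le_abs _ _ _

/-- Key deterministic bound on the parity gap expression. -/
lemma key_bound (α β a b : ℝ) (hα : α ∈ Set.Icc (0:ℝ) 1) (hβ : β ∈ Set.Icc (0:ℝ) 1)
    (ha : a ∈ Set.Icc (0:ℝ) 1) (hb : b ∈ Set.Icc (0:ℝ) 1) (hba : b ≤ a) :
    |α * (a + b) / (2 * a) - β - (1 - β) * (a - b) / (2 * (1 - b))| ≤ |α - a| + |β - b| := by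
  rcases eq_or_lt_of_le ha.1 with h0 | h0
  · -- a = 0, hence b = 0
    have hb0 : b = 0 := le_antisymm (h0 ▸ hba) hb.1
    subst hb0
    rw [← h0]
    have : |α * (0 + 0) / (2 * 0) - β - (1 - β) * (0 - 0) / (2 * (1 - 0))| = |β| := by
      norm_num
    rw [this, abs_of_nonneg hβ.1]
    have := abs_nonneg (α - 0)
    rw [abs_of_nonneg (by simpa using hβ.1 : (0:ℝ) ≤ β - 0)]
    linarith
  · rcases eq_or_lt_of_le hb.2 with h1 | h1
    · -- b = 1, hence a = 1
      have ha1 : a = 1 := le_antisymm ha.2 (h1 ▸ hba)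
      subst ha1; rw [h1]
      have : |α * (1 + 1) / (2 * 1) - β - (1 - β) * (1 - 1) / (2 * (1 - 1))| = |α - β| := by
        norm_num
      rw [this]
      have e1 : |α - 1| = 1 - α := by rw [abs_of_nonpos (by linarith [hα.2])]; ring
      have e2 : |β - 1| = 1 - β := by rw [abs_of_nonpos (by linarith [hβ.2])]; ring
      rw [e1, e2]
      rw [abs_le]
      constructor <;> nlinarith [hα.1, hα.2, hβ.1, hβ.2]
    · -- 0 < a, b < 1
      have hane : a ≠ 0 := ne_of_gt h0
      have hbne : (1 : ℝ) - b ≠ 0 := by linarith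
      have hid : α * (a + b) / (2 * a) - β - (1 - β) * (a - b) / (2 * (1 - b)) =
          (α - a) * ((a + b) / (2 * a)) + (β - b) * ((a - b) / (2 * (1 - b)) - 1) := by
        field_simp
        ring
      rw [hid]
      have hc0 : |(a + b) / (2 * a)| ≤ 1 := by
        rw [abs_of_nonneg (div_nonneg (by linarith [hb.1]) (by linarith))]
        rw [div_le_one (by linarith)]
        linarith
      have hc1 : |(a - b) / (2 * (1 - b)) - 1| ≤ 1 := by
        have h2 : (0:ℝ) ≤ (a - b) / (2 * (1 - b)) := by
          apply div_nonneg <;> linarith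
        have h3 : (a - b) / (2 * (1 - b)) ≤ 1 / 2 := by
          rw [div_le_div_iff₀ (by linarith) (by norm_num)]
          linarith [ha.2]
        rw [abs_le]; constructor <;> linarith
      calc |(α - a) * ((a + b) / (2 * a)) + (β - b) * ((a - b) / (2 * (1 - b)) - 1)|
          ≤ |(α - a) * ((a + b) / (2 * a))| + |(β - b) * ((a - b) / (2 * (1 - b)) - 1)| :=
            abs_add_le _ _
        _ = |α - a| * |(a + b) / (2 * a)| + |β - b| * |(a - b) / (2 * (1 - b)) - 1| := by
            rw [abs_mul, abs_mul]
        _ ≤ |α - a| * 1 + |β - b| * 1 := by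
            exact add_le_add (mul_le_mul_of_nonneg_left hc0 (abs_nonneg _))
              (mul_le_mul_of_nonneg_left hc1 (abs_nonneg _))
        _ = |α - a| + |β - b| := by ring

lemma G_le (α β l₀ l₁ : ℝ) (hα : α ∈ Set.Icc (0:ℝ) 1) (hβ : β ∈ Set.Icc (0:ℝ) 1) :
    G α β l₀ l₁ ≤ |l₀| + |l₁| := by
  have h0 : |α - clip (α + l₀)| ≤ |l₀| := by
    calc |α - clip (α + l₀)| = |clip α - clip (α + l₀)| := by rw [clip_of_mem hα]
      _ ≤ |α - (α + l₀)| := clip_lip _ _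
      _ = |l₀| := by rw [abs_sub_comm]; congr 1; ring
  have h1 : |β - clip (β + l₁)| ≤ |l₁| := by
    calc |β - clip (β + l₁)| = |clip β - clip (β + l₁)| := by rw [clip_of_mem hβ]
      _ ≤ |β - (β + l₁)| := clip_lip _ _
      _ = |l₁| := by rw [abs_sub_comm]; congr 1; ring
  unfold G
  simp only
  split_ifs with h
  · exact (key_bound α β _ _ hα hβ (clip_mem _) (clip_mem _) h).trans (add_le_add h0 h1)
  · have hk := key_bound β α (clip (β + l₁)) (clip (α + l₀)) hβ hα (clip_mem _) (clip_mem _)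
      (le_of_lt (not_le.1 h))
    rw [add_comm (clip (β + l₁)) (clip (α + l₀))] at hk
    exact hk.trans ((add_le_add h1 h0).trans_eq (add_comm _ _))

lemma integral_exp_div_Ioi (b t : ℝ) (hb : 0 < b) :
    ∫ x in Set.Ioi t, Real.exp (-(x / b)) = b * Real.exp (-(t / b)) := by
  have := integral_comp_mul_right_Ioi (fun y => Real.exp (-y)) t (b := b⁻¹) (by positivity)
  simp only [smul_eq_mul, inv_inv] at this
  have he : ∀ x : ℝ, Real.exp (-(x * b⁻¹)) = Real.exp (-(x / b)) := by
    intro x; rw [div_eq_mul_inv]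
  calc ∫ x in Set.Ioi t, Real.exp (-(x / b))
      = ∫ x in Set.Ioi t, Real.exp (-(x * b⁻¹)) := by
        refine setIntegral_congr_fun measurableSet_Ioi fun x _ => ?_
        rw [he]
    _ = b * ∫ x in Set.Ioi (t * b⁻¹), Real.exp (-x) := this
    _ = b * Real.exp (-(t / b)) := by rw [integral_exp_neg_Ioi, div_eq_mul_inv]

lemma lap_Ioi (b t : ℝ) (hb : 0 < b) (ht : 0 ≤ t) :
    Lap b (Set.Ioi t) = ENNReal.ofReal (Real.exp (-(t / b)) / 2) := by
  have h1 : Lap b (Set.Ioi t) =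
      ∫⁻ x in Set.Ioi t, ENNReal.ofReal ((2 * b)⁻¹ * Real.exp (-|x| / b)) :=
    withDensity_apply _ measurableSet_Ioi
  have h2 : (∫⁻ x in Set.Ioi t, ENNReal.ofReal ((2 * b)⁻¹ * Real.exp (-|x| / b)))
      = ∫⁻ x in Set.Ioi t, ENNReal.ofReal ((2 * b)⁻¹ * Real.exp (-(x / b))) :=
    setLIntegral_congr_fun measurableSet_Ioi (fun x hx => by
      rw [abs_of_nonneg (le_trans ht (le_of_lt hx)), neg_div])
  have hint : IntegrableOn (fun x => (2 * b)⁻¹ * Real.exp (-(x / b))) (Set.Ioi t) := by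
    have h4 : IntegrableOn (fun x => Real.exp (-(x / b))) (Set.Ioi t) := by
      refine (exp_neg_integrableOn_Ioi t (inv_pos.mpr hb)).congr_fun
        (fun x _ => ?_) measurableSet_Ioi
      beta_reduce; rw [neg_mul, div_eq_mul_inv, mul_comm]
    exact h4.const_mul _
  have hnn : 0 ≤ᵐ[volume.restrict (Set.Ioi t)]
      fun x => (2 * b)⁻¹ * Real.exp (-(x / b)) :=
    Filter.Eventually.of_forall fun x => by positivity
  have h5 := ofReal_integral_eq_lintegral_ofReal hint hnn
  rw [h1, h2, ← h5, integral_const_mul, integral_exp_div_Ioi b t hb]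
  congr 1
  field_simp

lemma lap_Iio (b t : ℝ) (hb : 0 < b) : Lap b (Set.Iio (-t)) = Lap b (Set.Ioi t) := by
  rw [Lap, withDensity_apply _ measurableSet_Iio, withDensity_apply _ measurableSet_Ioi]
  have hmp : MeasurePreserving (fun x : ℝ => -x) volume volume :=
    Measure.measurePreserving_neg _
  have hemb : MeasurableEmbedding (fun x : ℝ => -x) :=
    (Homeomorph.neg ℝ).measurableEmbedding
  have := hmp.setLIntegral_comp_emb hemb
    (fun x => ENNReal.ofReal ((2 * b)⁻¹ * Real.exp (-|x| / b))) (Set.Ioi t)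
  have himg : (fun x : ℝ => -x) '' Set.Ioi t = Set.Iio (-t) := by
    ext x
    simp only [Set.mem_image, Set.mem_Ioi, Set.mem_Iio]
    constructor
    · rintro ⟨y, hy, rfl⟩; linarith
    · intro hx; exact ⟨-x, by linarith, by ring⟩
  rw [himg] at this
  rw [← this]
  refine setLIntegral_congr_fun measurableSet_Ioi (fun x _ => ?_)
  rw [abs_neg]

lemma lap_tail (b t : ℝ) (hb : 0 < b) (ht : 0 ≤ t) :
    Lap b {x : ℝ | t < |x|} = ENNReal.ofReal (Real.exp (-(t / b))) := by
  have hset : {x : ℝ | t < |x|} = Set.Iio (-t) ∪ Set.Ioi t := by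
    ext x
    simp only [Set.mem_setOf_eq, Set.mem_union, Set.mem_Iio, Set.mem_Ioi, lt_abs, lt_neg]
    tauto
  rw [hset, measure_union _ measurableSet_Ioi, lap_Iio b t hb, lap_Ioi b t hb ht,
    ← ENNReal.ofReal_add (by positivity) (by positivity)]
  · congr 1; ring
  · refine Set.disjoint_left.mpr fun x hx hx' => ?_
    simp only [Set.mem_Iio, Set.mem_Ioi] at hx hx'
    linarith

lemma lap_univ (b : ℝ) (hb : 0 < b) : Lap b Set.univ = 1 := by
  have h0 : Lap b ({(0:ℝ)} : Set ℝ) = 0 := by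
    have : Lap b ≪ volume := withDensity_absolutelyContinuous _ _
    exact this (Real.volume_singleton)
  have hc : ({(0:ℝ)} : Set ℝ)ᶜ = {x : ℝ | 0 < |x|} := by
    ext x; simp [abs_pos]
  have := measure_add_measure_compl (μ := Lap b) (measurableSet_singleton (0:ℝ))
  rw [h0, zero_add, hc, lap_tail b 0 hb le_rfl] at this
  rw [← this]
  simp

/-- **Theorem 2 (fairness guarantee).** With probability at least `1 − η₀ − η₁` over the
independent Laplace noises, the statistical parity gap of Algorithm 2's classifier is at
most `b₀ log(1/η₀) + b₁ log(1/η₁)`. -/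
theorem algorithm2_fairness_whp
    (b₀ b₁ : ℝ) (hb₀ : 0 < b₀) (hb₁ : 0 < b₁)
    (η₀ η₁ : ℝ) (hη₀ : η₀ ∈ Set.Ioc (0:ℝ) 1) (hη₁ : η₁ ∈ Set.Ioc (0:ℝ) 1)
    (α β : ℝ) (hα : α ∈ Set.Icc (0:ℝ) 1) (hβ : β ∈ Set.Icc (0:ℝ) 1) :
    ((Lap b₀).prod (Lap b₁))
        {p : ℝ × ℝ | G α β p.1 p.2 > b₀ * Real.log (1 / η₀) + b₁ * Real.log (1 / η₁)}
      ≤ ENNReal.ofReal (η₀ + η₁) := by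
  haveI : IsProbabilityMeasure (Lap b₀) := ⟨lap_univ b₀ hb₀⟩
  haveI : IsProbabilityMeasure (Lap b₁) := ⟨lap_univ b₁ hb₁⟩
  set t₀ := b₀ * Real.log (1 / η₀) with ht₀def
  set t₁ := b₁ * Real.log (1 / η₁) with ht₁def
  have hlog₀ : 0 ≤ Real.log (1 / η₀) :=
    Real.log_nonneg ((le_div_iff₀ hη₀.1).mpr (by linarith [hη₀.2]))
  have hlog₁ : 0 ≤ Real.log (1 / η₁) :=
    Real.log_nonneg ((le_div_iff₀ hη₁.1).mpr (by linarith [hη₁.2]))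
  have ht₀ : 0 ≤ t₀ := mul_nonneg hb₀.le hlog₀
  have ht₁ : 0 ≤ t₁ := mul_nonneg hb₁.le hlog₁
  have hsub : {p : ℝ × ℝ | G α β p.1 p.2 > t₀ + t₁} ⊆
      ({x : ℝ | t₀ < |x|} ×ˢ Set.univ) ∪ (Set.univ ×ˢ {x : ℝ | t₁ < |x|}) := by
    intro p hp
    simp only [Set.mem_setOf_eq] at hp
    by_contra hcon
    simp only [Set.mem_union, Set.mem_prod, Set.mem_setOf_eq, Set.mem_univ, and_true,
      true_and, not_or, not_lt] at hcon
    have := G_le α β p.1 p.2 hα hβ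
    linarith [hcon.1, hcon.2]
  have htail₀ : Lap b₀ {x : ℝ | t₀ < |x|} = ENNReal.ofReal η₀ := by
    rw [lap_tail b₀ t₀ hb₀ ht₀]
    congr 1
    have hq : t₀ / b₀ = Real.log (1 / η₀) := by rw [ht₀def]; field_simp
    rw [hq, one_div, Real.log_inv, neg_neg, Real.exp_log hη₀.1]
  have htail₁ : Lap b₁ {x : ℝ | t₁ < |x|} = ENNReal.ofReal η₁ := by
    rw [lap_tail b₁ t₁ hb₁ ht₁]
    congr 1
    have hq : t₁ / b₁ = Real.log (1 / η₁) := by rw [ht₁def]; field_simp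
    rw [hq, one_div, Real.log_inv, neg_neg, Real.exp_log hη₁.1]
  calc ((Lap b₀).prod (Lap b₁)) {p : ℝ × ℝ | G α β p.1 p.2 > t₀ + t₁}
      ≤ ((Lap b₀).prod (Lap b₁))
          (({x : ℝ | t₀ < |x|} ×ˢ Set.univ) ∪ (Set.univ ×ˢ {x : ℝ | t₁ < |x|})) :=
        measure_mono hsub
    _ ≤ ((Lap b₀).prod (Lap b₁)) ({x : ℝ | t₀ < |x|} ×ˢ Set.univ) +
        ((Lap b₀).prod (Lap b₁)) (Set.univ ×ˢ {x : ℝ | t₁ < |x|}) := measure_union_le _ _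
    _ = ENNReal.ofReal η₀ + ENNReal.ofReal η₁ := by
        rw [Measure.prod_prod, Measure.prod_prod, measure_univ, measure_univ,
          mul_one, one_mul, htail₀, htail₁]
    _ = ENNReal.ofReal (η₀ + η₁) := (ENNReal.ofReal_add hη₀.1.le hη₁.1.le).symm
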